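/- arXiv:1606.04723 — 2 statements merged into one kernel-verified Lean document; each statement's English description precedes it below -/
import Mathlib

section
/- Assume the pressure p : [0,∞) → ℝ is continuous on [0,∞), continuously differentiable on (0,∞), and satisfies p(0) = 0, p'(ρ) > 0 for every ρ > 0, and lim_{ρ→∞} p'(ρ)/ρ^{γ−1} = p_∞ > 0 for some constant γ > 3/2. Then for every compact interval [a,b] ⊂ (0,∞) there exists a constant c > 0 such that for every r ∈ [a,b] and every ρ > 0: if r/2 < ρ < 2r then H(ρ) − H'(r)(ρ − r) − H(r) ≥ c (ρ − r)², and otherwise H(ρ) − H'(r)(ρ − r) − H(r) ≥ c (1 + ρ^γ). -/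
/-- The pressure potential `H(ρ) = ρ ∫₁^ρ p(z)/z² dz`. -/
noncomputable def Hpot (p : ℝ → ℝ) (ρ : ℝ) : ℝ :=
  ρ * ∫ z in (1:ℝ)..ρ, p z / z ^ 2

open Set MeasureTheory intervalIntegral Filter

namespace Stmt6

noncomputable def G (p : ℝ → ℝ) (s : ℝ) : ℝ := (∫ z in (1:ℝ)..s, p z / z ^ 2) + p s / s

variable {p p' : ℝ → ℝ} {x y s r ρ : ℝ}

lemma mem_Ioi_of_uIcc (hx : 0 < x) (hy : 0 < y) (ht : s ∈ Set.uIcc x y) :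
    s ∈ Set.Ioi (0:ℝ) := lt_of_lt_of_le (lt_inf_iff.mpr ⟨hx, hy⟩) ht.1

lemma contF (hpc : ContinuousOn p (Set.Ici 0)) :
    ContinuousOn (fun z => p z / z ^ 2) (Set.Ioi 0) :=
  (hpc.mono Set.Ioi_subset_Ici_self).div ((continuous_pow 2).continuousOn)
    (fun z hz => pow_ne_zero 2 (ne_of_gt hz))

lemma intbleF (hpc : ContinuousOn p (Set.Ici 0)) (hx : 0 < x) (hy : 0 < y) :
    IntervalIntegrable (fun z => p z / z ^ 2) volume x y :=
  (ContinuousOn.mono (contF hpc) (fun _ ht => mem_Ioi_of_uIcc hx hy ht)).intervalIntegrable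

lemma hasDerivAt_H (hpc : ContinuousOn p (Set.Ici 0)) (hs : 0 < s) :
    HasDerivAt (Hpot p) (G p s) s := by
  have hF : HasDerivAt (fun u => ∫ z in (1:ℝ)..u, p z / z ^ 2) (p s / s ^ 2) s :=
    integral_hasDerivAt_right (intbleF hpc one_pos hs)
      ((contF hpc).stronglyMeasurableAtFilter isOpen_Ioi s hs)
      ((contF hpc).continuousAt (Ioi_mem_nhds hs))
  have h := (hasDerivAt_id s).mul hF
  have : Hpot p = fun u => id u * ∫ z in (1:ℝ)..u, p z / z ^ 2 := rfl
  rw [this]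
  refine h.congr_deriv ?_
  unfold G
  simp only [id]
  have hs' : s ≠ 0 := hs.ne'
  field_simp

lemma hasDerivAt_G (hpc : ContinuousOn p (Set.Ici 0))
    (hp : ∀ u ∈ Set.Ioi (0:ℝ), HasDerivAt p (p' u) u) (hs : 0 < s) :
    HasDerivAt (G p) (p' s / s) s := by
  have hF : HasDerivAt (fun u => ∫ z in (1:ℝ)..u, p z / z ^ 2) (p s / s ^ 2) s :=
    integral_hasDerivAt_right (intbleF hpc one_pos hs)
      ((contF hpc).stronglyMeasurableAtFilter isOpen_Ioi s hs)
      ((contF hpc).continuousAt (Ioi_mem_nhds hs))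
  have h2 : HasDerivAt (fun u => p u / u) ((p' s * s - p s * 1) / s ^ 2) s :=
    (hp s hs).div (hasDerivAt_id s) hs.ne'
  have h := hF.add h2
  refine h.congr_deriv ?_
  have hs' : s ≠ 0 := hs.ne'
  field_simp
  ring

lemma contG (hpc : ContinuousOn p (Set.Ici 0))
    (hp : ∀ u ∈ Set.Ioi (0:ℝ), HasDerivAt p (p' u) u) :
    ContinuousOn (G p) (Set.Ioi 0) :=
  fun s hs => (hasDerivAt_G hpc hp hs).continuousAt.continuousWithinAt

lemma intbleG (hpc : ContinuousOn p (Set.Ici 0))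
    (hp : ∀ u ∈ Set.Ioi (0:ℝ), HasDerivAt p (p' u) u) (hx : 0 < x) (hy : 0 < y) :
    IntervalIntegrable (fun u => G p u - G p r) volume x y :=
  (((contG hpc hp).sub continuousOn_const).mono
    (fun _ ht => mem_Ioi_of_uIcc hx hy ht)).intervalIntegrable

lemma intbleP' (hp' : ContinuousOn p' (Set.Ioi 0)) (hx : 0 < x) (hy : 0 < y) :
    IntervalIntegrable (fun t => p' t / t) volume x y :=
  ((hp'.div continuousOn_id (fun _ ht => ne_of_gt ht)).mono
    (fun _ ht => mem_Ioi_of_uIcc hx hy ht)).intervalIntegrable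

lemma Gdiff (hpc : ContinuousOn p (Set.Ici 0))
    (hp : ∀ u ∈ Set.Ioi (0:ℝ), HasDerivAt p (p' u) u)
    (hp' : ContinuousOn p' (Set.Ioi 0)) (hx : 0 < x) (hy : 0 < y) :
    G p y - G p x = ∫ t in x..y, p' t / t :=
  (integral_eq_sub_of_hasDerivAt
     (fun t ht => hasDerivAt_G hpc hp (mem_Ioi_of_uIcc hx hy ht))
     (intbleP' hp' hx hy)).symm

lemma Gmono (hpc : ContinuousOn p (Set.Ici 0))
    (hp : ∀ u ∈ Set.Ioi (0:ℝ), HasDerivAt p (p' u) u)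
    (hp' : ContinuousOn p' (Set.Ioi 0))
    (hppos : ∀ u ∈ Set.Ioi (0:ℝ), 0 < p' u)
    (hx : 0 < x) (hxy : x ≤ y) : G p x ≤ G p y := by
  have hy : 0 < y := lt_of_lt_of_le hx hxy
  have := Gdiff (p' := p') hpc hp hp' hx hy
  have hnn : 0 ≤ ∫ t in x..y, p' t / t :=
    intervalIntegral.integral_nonneg hxy (fun t ht =>
      div_nonneg (hppos t (lt_of_lt_of_le hx ht.1)).le
        (le_of_lt (lt_of_lt_of_le hx ht.1)))
  linarith

lemma Erep (hpc : ContinuousOn p (Set.Ici 0))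
    (hp : ∀ u ∈ Set.Ioi (0:ℝ), HasDerivAt p (p' u) u)
    (hr : 0 < r) (hρ : 0 < ρ) :
    Hpot p ρ - G p r * (ρ - r) - Hpot p r = ∫ s in r..ρ, (G p s - G p r) := by
  have h := integral_eq_sub_of_hasDerivAt (f := fun u => Hpot p u - G p r * u)
    (f' := fun u => G p u - G p r)
    (fun u hu => by
      exact ((hasDerivAt_H hpc (mem_Ioi_of_uIcc hr hρ hu)).sub
        ((hasDerivAt_id u).const_mul (G p r))).congr_deriv (by ring))
    (intbleG hpc hp hr hρ)
  rw [h]; ring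



lemma int_linear (m r x y : ℝ) :
    ∫ u in x..y, m * (u - r) = m/2*(y-r)^2 - m/2*(x-r)^2 := by
  have hφ : ∀ u : ℝ, HasDerivAt (fun w => m/2*(w-r)^2) (m*(u-r)) u := fun u => by
    have h := (((hasDerivAt_id u).sub_const r).pow 2).const_mul (m/2)
    refine h.congr_deriv ?_
    simp; ring
  rw [integral_eq_sub_of_hasDerivAt (fun u _ => hφ u)
    ((Continuous.intervalIntegrable (by continuity) _ _))]

lemma Gstrong (hpc : ContinuousOn p (Set.Ici 0))
    (hp : ∀ u ∈ Set.Ioi (0:ℝ), HasDerivAt p (p' u) u)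
    (hp' : ContinuousOn p' (Set.Ioi 0)) {lo hi m : ℝ} (hlo : 0 < lo)
    (hm : ∀ t ∈ Icc lo hi, m ≤ p' t / t)
    (hr : r ∈ Icc lo hi) (hs : s ∈ Icc lo hi) (hrs : r ≤ s) :
    m * (s - r) ≤ G p s - G p r := by
  have hr0 : 0 < r := lt_of_lt_of_le hlo hr.1
  have hs0 : 0 < s := lt_of_lt_of_le hlo hs.1
  rw [Gdiff hpc hp hp' hr0 hs0]
  have h := intervalIntegral.integral_mono_on (μ := volume)
    (f := fun _ => m) (g := fun t => p' t / t) hrs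
    intervalIntegrable_const (intbleP' hp' hr0 hs0)
    (fun t ht => hm t ⟨le_trans hr.1 ht.1, le_trans ht.2 hs.2⟩)
  simpa [intervalIntegral.integral_const, smul_eq_mul, mul_comm] using h

lemma Elower (hpc : ContinuousOn p (Set.Ici 0))
    (hp : ∀ u ∈ Set.Ioi (0:ℝ), HasDerivAt p (p' u) u)
    (hp' : ContinuousOn p' (Set.Ioi 0)) {lo hi m : ℝ} (hlo : 0 < lo)
    (hm : ∀ t ∈ Icc lo hi, m ≤ p' t / t)
    (hr : r ∈ Icc lo hi) (hρ : ρ ∈ Icc lo hi) :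
    m/2 * (ρ - r)^2 ≤ Hpot p ρ - G p r * (ρ - r) - Hpot p r := by
  have hr0 : 0 < r := lt_of_lt_of_le hlo hr.1
  have hρ0 : 0 < ρ := lt_of_lt_of_le hlo hρ.1
  rw [Erep hpc hp hr0 hρ0]
  rcases le_total r ρ with h | h
  · have hmono := intervalIntegral.integral_mono_on (μ := volume)
      (f := fun u => m * (u - r)) (g := fun u => G p u - G p r) h
      ((by continuity : Continuous fun u : ℝ => m*(u - r)).intervalIntegrable _ _)
      (intbleG hpc hp hr0 hρ0)
      (fun u hu => Gstrong hpc hp hp' hlo hm hr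
        ⟨le_trans hr.1 hu.1, le_trans hu.2 hρ.2⟩ hu.1)
    rw [int_linear] at hmono
    nlinarith [hmono]
  · rw [intervalIntegral.integral_symm]
    have hmono := intervalIntegral.integral_mono_on (μ := volume)
      (f := fun u => G p u - G p r) (g := fun u => m * (u - r)) h
      (intbleG hpc hp hρ0 hr0)
      ((by continuity : Continuous fun u : ℝ => m*(u - r)).intervalIntegrable _ _)
      (fun u hu => by
        have h1 := Gstrong hpc hp hp' hlo hm
          ⟨le_trans hρ.1 hu.1, le_trans hu.2 hr.2⟩ hr hu.2
        show G p u - G p r ≤ m * (u - r)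
        linarith)
    rw [int_linear] at hmono
    nlinarith [hmono]

lemma Ediff (hpc : ContinuousOn p (Set.Ici 0))
    (hp : ∀ u ∈ Set.Ioi (0:ℝ), HasDerivAt p (p' u) u)
    {ρ' : ℝ} (hr : 0 < r) (hρ : 0 < ρ) (hρ' : 0 < ρ') :
    (Hpot p ρ - G p r * (ρ - r) - Hpot p r) - (Hpot p ρ' - G p r * (ρ' - r) - Hpot p r)
      = ∫ u in ρ'..ρ, (G p u - G p r) := by
  rw [Erep hpc hp hr hρ, Erep hpc hp hr hρ']
  have h := intervalIntegral.integral_add_adjacent_intervals (μ := volume)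
    (intbleG (r := r) hpc hp hr hρ') (intbleG (r := r) hpc hp hρ' hρ)
  linarith

lemma Emono (hpc : ContinuousOn p (Set.Ici 0))
    (hp : ∀ u ∈ Set.Ioi (0:ℝ), HasDerivAt p (p' u) u)
    (hp' : ContinuousOn p' (Set.Ioi 0))
    (hppos : ∀ u ∈ Set.Ioi (0:ℝ), 0 < p' u)
    {ρ' : ℝ} (hr : 0 < r) (hρ : 0 < ρ) (hρ' : 0 < ρ')
    (h : ρ' ∈ Set.uIcc r ρ) :
    Hpot p ρ' - G p r * (ρ' - r) - Hpot p r ≤ Hpot p ρ - G p r * (ρ - r) - Hpot p r := by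
  have hd := Ediff (p' := p') hpc hp hr hρ hρ'
  rcases le_total r ρ with hc | hc
  · -- r ≤ ρ' ≤ ρ
    rw [Set.uIcc_of_le hc] at h
    have hnn : 0 ≤ ∫ u in ρ'..ρ, (G p u - G p r) :=
      intervalIntegral.integral_nonneg h.2 (fun u hu => sub_nonneg.mpr
        (Gmono hpc hp hp' hppos hr (le_trans h.1 hu.1)))
    linarith
  · -- ρ ≤ ρ' ≤ r
    rw [Set.uIcc_of_ge hc] at h
    have hswap : (∫ u in ρ'..ρ, (G p u - G p r))
        = - ∫ u in ρ..ρ', (G p u - G p r) := intervalIntegral.integral_symm _ _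
    have hnn : 0 ≤ ∫ u in ρ..ρ', (G p r - G p u) :=
      intervalIntegral.integral_nonneg h.1 (fun u hu => sub_nonneg.mpr
        (Gmono hpc hp hp' hppos (lt_of_lt_of_le hρ hu.1) (le_trans hu.2 h.2)))
    have hneg : (∫ u in ρ..ρ', (G p r - G p u))
        = - ∫ u in ρ..ρ', (G p u - G p r) := by
      rw [← intervalIntegral.integral_neg]
      congr 1; funext u; ring
    linarith



lemma Egrow (hpc : ContinuousOn p (Set.Ici 0))
    (hp : ∀ u ∈ Set.Ioi (0:ℝ), HasDerivAt p (p' u) u)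
    (hp' : ContinuousOn p' (Set.Ioi 0))
    (hppos : ∀ u ∈ Set.Ioi (0:ℝ), 0 < p' u)
    {T γ pinf : ℝ} (hγ : 3/2 < γ) (hpinf : 0 < pinf) (hT1 : 1 ≤ T)
    (hT : ∀ t, T ≤ t → pinf/2 * t ^ (γ-1) ≤ p' t)
    (hr0 : 0 < r) (hrT : r ≤ T) (hρ4 : 4*T ≤ ρ) :
    (pinf/2 * (1 - (1/2:ℝ)^(γ-1)) / (γ-1)) * (1 - (1/2:ℝ)^γ) / γ * ρ^γ
      ≤ Hpot p ρ - G p r * (ρ - r) - Hpot p r := by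
  have hTpos : (0:ℝ) < T := by linarith
  have hγ1 : (0:ℝ) < γ - 1 := by linarith
  have hγ0 : (0:ℝ) < γ := by linarith
  have hγ1' : γ - 1 ≠ 0 := hγ1.ne'
  have hγ0' : γ ≠ 0 := hγ0.ne'
  set c2 := pinf/2 * (1 - (1/2:ℝ)^(γ-1)) / (γ-1) with hc2def
  have stepA : ∀ s, 2*T ≤ s → c2 * s^(γ-1) ≤ G p s - G p r := by
    intro s hs
    have hs0 : (0:ℝ) < s := by linarith
    rw [Gdiff hpc hp hp' hr0 hs0]
    have hsplit := intervalIntegral.integral_add_adjacent_intervals (μ := volume)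
      (intbleP' hp' hr0 hTpos) (intbleP' hp' hTpos hs0)
    have h1 : 0 ≤ ∫ t in r..T, p' t / t :=
      intervalIntegral.integral_nonneg hrT (fun t ht =>
        div_nonneg (hppos t (lt_of_lt_of_le hr0 ht.1)).le
          (le_of_lt (lt_of_lt_of_le hr0 ht.1)))
    have hTs : T ≤ s := by linarith
    have h2 : (∫ t in T..s, pinf/2 * t ^ (γ-2)) ≤ ∫ t in T..s, p' t / t := by
      refine intervalIntegral.integral_mono_on hTs
        ((intervalIntegral.intervalIntegrable_rpow' (by linarith)).const_mul _)
        (intbleP' hp' hTpos hs0) (fun t ht => ?_)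
      have ht0 : (0:ℝ) < t := lt_of_lt_of_le hTpos ht.1
      have hpt := hT t ht.1
      show pinf/2 * t ^ (γ-2) ≤ p' t / t
      rw [show γ - 2 = (γ-1) - 1 by ring, Real.rpow_sub ht0, Real.rpow_one,
        ← mul_div_assoc]
      gcongr
    have h3 : (∫ t in T..s, pinf/2 * t ^ (γ-2)) = pinf/2 * ((s^(γ-1) - T^(γ-1))/(γ-1)) := by
      rw [intervalIntegral.integral_const_mul,
        integral_rpow (Or.inl (by linarith : (-1:ℝ) < γ-2)),
        show γ - 2 + 1 = γ - 1 by ring]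
    have h4 : T^(γ-1) ≤ (1/2:ℝ)^(γ-1) * s^(γ-1) := by
      have hh : T ≤ (1/2) * s := by linarith
      calc T^(γ-1) ≤ ((1/2)*s)^(γ-1) := Real.rpow_le_rpow hTpos.le hh hγ1.le
        _ = (1/2:ℝ)^(γ-1) * s^(γ-1) := Real.mul_rpow (by norm_num) hs0.le
    have e : pinf/2 * ((s^(γ-1) - T^(γ-1))/(γ-1)) - c2 * s^(γ-1)
        = pinf/2 / (γ-1) * ((1/2:ℝ)^(γ-1) * s^(γ-1) - T^(γ-1)) := by
      rw [hc2def]; field_simp; ring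
    have hfac : 0 ≤ pinf/2/(γ-1) := by positivity
    linarith [mul_nonneg hfac (sub_nonneg.mpr h4)]
  have h2T : (0:ℝ) < 2*T := by linarith
  have hρ0 : (0:ℝ) < ρ := by linarith
  rw [Erep hpc hp hr0 hρ0]
  have hsplit := intervalIntegral.integral_add_adjacent_intervals (μ := volume)
    (intbleG (r := r) hpc hp hr0 h2T) (intbleG (r := r) hpc hp h2T hρ0)
  have h1 : 0 ≤ ∫ u in r..2*T, (G p u - G p r) :=
    intervalIntegral.integral_nonneg (by linarith) (fun u hu => sub_nonneg.mpr
      (Gmono hpc hp hp' hppos hr0 hu.1))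
  have h2Tρ : 2*T ≤ ρ := by linarith
  have h2 : (∫ u in 2*T..ρ, c2 * u ^ (γ-1)) ≤ ∫ u in 2*T..ρ, (G p u - G p r) :=
    intervalIntegral.integral_mono_on h2Tρ
      ((intervalIntegral.intervalIntegrable_rpow' (by linarith)).const_mul _)
      (intbleG hpc hp h2T hρ0) (fun u hu => stepA u hu.1)
  have h3 : (∫ u in 2*T..ρ, c2 * u ^ (γ-1)) = c2 * ((ρ^γ - (2*T)^γ)/γ) := by
    rw [intervalIntegral.integral_const_mul,
      integral_rpow (Or.inl (by linarith : (-1:ℝ) < γ-1)),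
      show γ - 1 + 1 = γ by ring]
  have h4 : (2*T)^γ ≤ (1/2:ℝ)^γ * ρ^γ := by
    have hh : 2*T ≤ (1/2)*ρ := by linarith
    calc (2*T)^γ ≤ ((1/2)*ρ)^γ := Real.rpow_le_rpow h2T.le hh hγ0.le
      _ = (1/2:ℝ)^γ * ρ^γ := Real.mul_rpow (by norm_num) hρ0.le
  have hκ : (1/2:ℝ)^(γ-1) < 1 := Real.rpow_lt_one (by norm_num) (by norm_num) hγ1
  have hc2nn : 0 ≤ c2 := by
    rw [hc2def]
    apply div_nonneg (mul_nonneg (by linarith) (by linarith)) hγ1.le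
  have e : c2 * ((ρ^γ - (2*T)^γ)/γ) - c2 * (1 - (1/2:ℝ)^γ) / γ * ρ^γ
      = c2/γ * ((1/2:ℝ)^γ * ρ^γ - (2*T)^γ) := by field_simp; ring
  have hfac : 0 ≤ c2/γ := div_nonneg hc2nn hγ0.le
  linarith [mul_nonneg hfac (sub_nonneg.mpr h4)]

end Stmt6

set_option maxHeartbeats 1000000 in
open Stmt6 in
/-- Under the standing assumptions on the pressure (continuous on `[0,∞)`, `C¹` on
`(0,∞)`, `p(0)=0`, `p' > 0`, `p'(ρ)/ρ^{γ−1} → p_∞ > 0` with `γ > 3/2`), for every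
compact interval `[a,b] ⊂ (0,∞)` there is `c > 0` such that for `r ∈ [a,b]`, `ρ > 0`:
`H(ρ) − H'(r)(ρ−r) − H(r) ≥ c(ρ−r)²` if `r/2 < ρ < 2r`, and `≥ c(1+ρ^γ)` otherwise. -/
theorem stmt_6 (p p' : ℝ → ℝ) (γ pinf : ℝ) (hγ : 3/2 < γ) (hpinf : 0 < pinf)
    (hpc : ContinuousOn p (Set.Ici 0)) (hp0 : p 0 = 0)
    (hp : ∀ s ∈ Set.Ioi (0:ℝ), HasDerivAt p (p' s) s)
    (hp' : ContinuousOn p' (Set.Ioi 0))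
    (hppos : ∀ s ∈ Set.Ioi (0:ℝ), 0 < p' s)
    (hlim : Filter.Tendsto (fun s : ℝ => p' s / s ^ (γ - 1)) Filter.atTop (nhds pinf))
    (a b : ℝ) (ha : 0 < a) (hab : a ≤ b) :
    ∃ c > (0:ℝ), ∀ r ∈ Set.Icc a b, ∀ ρ > (0:ℝ),
      ((r/2 < ρ ∧ ρ < 2*r) →
        c * (ρ - r) ^ 2 ≤ Hpot p ρ - deriv (Hpot p) r * (ρ - r) - Hpot p r) ∧
      (¬(r/2 < ρ ∧ ρ < 2*r) →
        c * (1 + ρ ^ γ) ≤ Hpot p ρ - deriv (Hpot p) r * (ρ - r) - Hpot p r) := by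
  have ha2 : (0:ℝ) < a/2 := by linarith
  have hb0 : (0:ℝ) < b := lt_of_lt_of_le ha hab
  -- the minimum of p'/t on [a/2, 2b]
  have hKsub : Set.Icc (a/2) (2*b) ⊆ Set.Ioi (0:ℝ) :=
    fun t ht => lt_of_lt_of_le ha2 ht.1
  have hcont : ContinuousOn (fun t => p' t / t) (Set.Icc (a/2) (2*b)) :=
    (hp'.div continuousOn_id (fun t ht => ne_of_gt ht)).mono hKsub
  obtain ⟨t₀, ht₀K, ht₀min⟩ := isCompact_Icc.exists_isMinOn
    (⟨a, by constructor <;> linarith⟩ : (Set.Icc (a/2) (2*b)).Nonempty) hcont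
  set m := p' t₀ / t₀ with hmdef
  have ht₀pos : (0:ℝ) < t₀ := hKsub ht₀K
  have hmpos : 0 < m := div_pos (hppos t₀ (hKsub ht₀K)) ht₀pos
  have hmle : ∀ t ∈ Set.Icc (a/2) (2*b), m ≤ p' t / t := fun t ht => ht₀min ht
  -- the threshold T
  obtain ⟨T₀, hT₀⟩ := Filter.eventually_atTop.mp
    (hlim.eventually (eventually_ge_nhds (by linarith : pinf/2 < pinf)))
  set T := max T₀ (max 1 (2*b)) with hTdef
  have hT1 : (1:ℝ) ≤ T := le_trans (le_max_left 1 (2*b)) (le_max_right _ _)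
  have hTb : 2*b ≤ T := le_trans (le_max_right 1 (2*b)) (le_max_right _ _)
  have hTpos : (0:ℝ) < T := by linarith
  have hT : ∀ t, T ≤ t → pinf/2 * t ^ (γ-1) ≤ p' t := by
    intro t ht
    have h1 := hT₀ t (le_trans (le_max_left _ _) ht)
    have ht0 : (0:ℝ) < t := lt_of_lt_of_le hTpos ht
    have hpow : (0:ℝ) < t ^ (γ-1) := Real.rpow_pos_of_pos ht0 _
    rw [le_div_iff₀ hpow] at h1
    linarith
  -- constants
  have hγ1 : (0:ℝ) < γ - 1 := by linarith
  have hγ0 : (0:ℝ) < γ := by linarith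
  have hκ1 : (1/2:ℝ)^(γ-1) < 1 := Real.rpow_lt_one (by norm_num) (by norm_num) hγ1
  have hκ2 : (1/2:ℝ)^γ < 1 := Real.rpow_lt_one (by norm_num) (by norm_num) hγ0
  set c3 := (pinf/2 * (1 - (1/2:ℝ)^(γ-1)) / (γ-1)) * (1 - (1/2:ℝ)^γ) / γ with hc3def
  have hc3 : 0 < c3 := by
    apply div_pos (mul_pos (div_pos (mul_pos (by linarith) (by linarith)) hγ1) _) hγ0
    linarith
  have h4T : (0:ℝ) < (1 + (4*T)^γ) := by positivity
  set cbase := m/2 * (a/2)^2 with hcbase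
  have hcbase0 : 0 < cbase := by positivity
  set cfar := cbase / (1 + (4*T)^γ) with hcfar
  have hcfar0 : 0 < cfar := div_pos hcbase0 h4T
  refine ⟨min (m/2) (min cfar (c3/2)), by positivity, fun r hr ρ hρ0 => ?_⟩
  have hr0 : (0:ℝ) < r := lt_of_lt_of_le ha hr.1
  have hdr : deriv (Hpot p) r = G p r := (hasDerivAt_H hpc hr0).deriv
  rw [hdr]
  have hrK : r ∈ Set.Icc (a/2) (2*b) := ⟨by linarith [hr.1], by linarith [hr.2]⟩
  constructor
  · rintro ⟨h1, h2⟩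
    have hρK : ρ ∈ Set.Icc (a/2) (2*b) :=
      ⟨by nlinarith [hr.1], by nlinarith [hr.2]⟩
    have hE := Elower hpc hp hp' ha2 hmle hrK hρK
    have := min_le_left (m/2) (min cfar (c3/2))
    nlinarith [sq_nonneg (ρ - r)]
  · intro hcase
    set c := min (m/2) (min cfar (c3/2)) with hcdef
    have hc0 : 0 < c := by positivity
    have hccfar : c ≤ cfar := le_trans (min_le_right _ _) (min_le_left _ _)
    have hcc3 : c ≤ c3/2 := le_trans (min_le_right _ _) (min_le_right _ _)
    -- bounded-far bound: if ρ ≤ 4*T we use the boundary point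
    rcases le_or_gt ρ (r/2) with hle | hgt
    · -- ρ ≤ r/2
      have hmidK : r/2 ∈ Set.Icc (a/2) (2*b) := ⟨by linarith [hr.1], by linarith [hr.2]⟩
      have hE1 := Elower hpc hp hp' ha2 hmle hrK hmidK
      have hE2 := Emono (p' := p') hpc hp hp' hppos hr0 hρ0 (by linarith : (0:ℝ) < r/2)
        (by rw [Set.uIcc_of_ge (by linarith : ρ ≤ r)]; exact ⟨by linarith, by linarith⟩)
      have hEb : cbase ≤ Hpot p ρ - G p r * (ρ - r) - Hpot p r := by
        have hsq : (a/2)^2 ≤ (r/2 - r)^2 := by nlinarith [hr.1, ha]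
        have : m/2 * (a/2)^2 ≤ m/2 * (r/2 - r)^2 :=
          mul_le_mul_of_nonneg_left hsq (by positivity)
        rw [hcbase]; linarith
      have hρT : ρ ≤ 4*T := by linarith [hr.2]
      have hργ : ρ^γ ≤ (4*T)^γ := Real.rpow_le_rpow hρ0.le (by linarith) hγ0.le
      have hfin : c * (1 + ρ^γ) ≤ cfar * (1 + (4*T)^γ) := by
        apply mul_le_mul hccfar (by linarith) (by positivity) hcfar0.le
      rw [hcfar, div_mul_cancel₀ _ h4T.ne'] at hfin
      linarith
    · -- r/2 < ρ, so 2r ≤ ρ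
      have h2r : 2*r ≤ ρ := by
        by_contra hco
        exact hcase ⟨hgt, by linarith⟩
      rcases le_or_gt ρ (4*T) with hρT | hρT
      · have hmidK : 2*r ∈ Set.Icc (a/2) (2*b) := ⟨by linarith [hr.1], by linarith [hr.2]⟩
        have hE1 := Elower hpc hp hp' ha2 hmle hrK hmidK
        have hE2 := Emono (p' := p') hpc hp hp' hppos hr0 hρ0 (by linarith : (0:ℝ) < 2*r)
          (by rw [Set.uIcc_of_le (by linarith : r ≤ ρ)]; exact ⟨by linarith, by linarith⟩)
        have hEb : cbase ≤ Hpot p ρ - G p r * (ρ - r) - Hpot p r := by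
          have hsq : (a/2)^2 ≤ (2*r - r)^2 := by nlinarith [hr.1, ha]
          have : m/2 * (a/2)^2 ≤ m/2 * (2*r - r)^2 :=
            mul_le_mul_of_nonneg_left hsq (by positivity)
          rw [hcbase]; linarith
        have hργ : ρ^γ ≤ (4*T)^γ := Real.rpow_le_rpow hρ0.le (by linarith) hγ0.le
        have hfin : c * (1 + ρ^γ) ≤ cfar * (1 + (4*T)^γ) := by
          apply mul_le_mul hccfar (by linarith) (by positivity) hcfar0.le
        rw [hcfar, div_mul_cancel₀ _ h4T.ne'] at hfin
        linarith
      · -- growth regime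
        have hE := Egrow hpc hp hp' hppos hγ hpinf hT1 hT hr0
          (by linarith [hr.2] : r ≤ T) hρT.le
        rw [← hc3def] at hE
        have hρ1 : (1:ℝ) ≤ ρ := by linarith
        have h1ρ : (1:ℝ) ≤ ρ^γ := Real.one_le_rpow hρ1 hγ0.le
        have : c * (1 + ρ^γ) ≤ c3/2 * (ρ^γ + ρ^γ) := by
          apply mul_le_mul hcc3 (by linarith) (by positivity) (by linarith)
        nlinarith
end

section
/- (Transport theorem) Let T > 0, let V : ℝ × ℝ³ → ℝ³ be continuously differentiable, and let X : ℝ × ℝ³ → ℝ³ be continuously differentiable and satisfy ∂_t X(t,x) = V(t, X(t,x)) for all (t,x) and X(0,x) = x, with X(t,·) injective for each t ∈ [0,T]. Let Ω₀ ⊂ ℝ³ be a bounded open set and set Ω_t = X(t, Ω₀). Then for every continuously differentiable, compactly supported f : ℝ × ℝ³ → ℝ, the function t ↦ ∫_{Ω_t} f(t,x) dx is differentiable on (0,T) with derivative d/dt ∫_{Ω_t} f(t,x) dx = ∫_{Ω_t} ( ∂_t f(t,x) + div_x( f(t,x) V(t,x) ) ) dx. -/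
open MeasureTheory

private lemma single_eq_ite (j : Fin 3) : (Pi.single j 1 : Fin 3 → ℝ) = fun j' => if j' = j then 1 else 0 := by
  funext j'; simp [Pi.single_apply]

private lemma clm_apply_eq_sum (L : (Fin 3 → ℝ) →L[ℝ] (Fin 3 → ℝ)) (v : Fin 3 → ℝ) (i : Fin 3) :
    L v i = ∑ k, v k * L (Pi.single k 1) i := by
  have hv : v = ∑ k, v k • (Pi.single k (1:ℝ) : Fin 3 → ℝ) := by
    funext j
    simp [Finset.sum_apply, Pi.single_apply]
  conv_lhs => rw [hv]
  rw [map_sum]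
  simp [Finset.sum_apply]

private lemma det3_ode (M : ℝ → Matrix (Fin 3) (Fin 3) ℝ) (A : Matrix (Fin 3) (Fin 3) ℝ) (t : ℝ)
    (h : ∀ i j, HasDerivAt (fun s => M s i j) (∑ k, A i k * M t k j) t) :
    HasDerivAt (fun s => (M s).det) (A.trace * (M t).det) t := by
  have h' : ∀ i j, HasDerivAt (fun s => M s i j)
      (A i 0 * M t 0 j + A i 1 * M t 1 j + A i 2 * M t 2 j) t := by
    intro i j; have := h i j; rwa [Fin.sum_univ_three] at this
  have key := ((((((((h' 0 0).mul (h' 1 1)).mul (h' 2 2)).sub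
      (((h' 0 0).mul (h' 1 2)).mul (h' 2 1))).sub
      (((h' 0 1).mul (h' 1 0)).mul (h' 2 2))).add
      (((h' 0 1).mul (h' 1 2)).mul (h' 2 0))).add
      (((h' 0 2).mul (h' 1 0)).mul (h' 2 1))).sub
      (((h' 0 2).mul (h' 1 1)).mul (h' 2 0)))
  have hfun : (fun s => (M s).det) = (fun s =>
      M s 0 0 * M s 1 1 * M s 2 2 - M s 0 0 * M s 1 2 * M s 2 1 - M s 0 1 * M s 1 0 * M s 2 2 +
        M s 0 1 * M s 1 2 * M s 2 0 + M s 0 2 * M s 1 0 * M s 2 1 - M s 0 2 * M s 1 1 * M s 2 0) := by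
    funext s; rw [Matrix.det_fin_three]
  rw [hfun]
  refine key.congr_deriv ?_
  simp only [Pi.mul_apply]
  rw [Matrix.det_fin_three, Matrix.trace_fin_three]
  ring

abbrev E3 : Type := Fin 3 → ℝ

private noncomputable def Jm (X : ℝ × E3 → E3) (t : ℝ) (y : E3) : E3 →L[ℝ] E3 :=
  (fderiv ℝ X (t, y)).comp (ContinuousLinearMap.inr ℝ ℝ E3)

private noncomputable def Am (V : ℝ × E3 → E3) (p : ℝ × E3) : E3 →L[ℝ] E3 :=
  (fderiv ℝ V p).comp (ContinuousLinearMap.inr ℝ ℝ E3)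

private noncomputable def Bm (V X : ℝ × E3 → E3) (s : ℝ) (y : E3) : E3 →L[ℝ] E3 :=
  (Am V (s, X (s, y))).comp (Jm X s y)

private noncomputable def Mm (X : ℝ × E3 → E3) (t : ℝ) (y : E3) : Matrix (Fin 3) (Fin 3) ℝ :=
  Matrix.of fun i j => Jm X t y (Pi.single j 1) i

private noncomputable def Dm (X : ℝ × E3 → E3) (t : ℝ) (y : E3) : ℝ :=
  (Mm X t y).det

private noncomputable def τm (V X : ℝ × E3 → E3) (t : ℝ) (y : E3) : ℝ :=
  ∑ i, Am V (t, X (t, y)) (Pi.single i 1) i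


private noncomputable def Wm (V X : ℝ × E3 → E3) (p : ℝ × E3) : E3 :=
  V (p.1, X p)

private noncomputable def ρm (X : ℝ × E3 → E3) (f : ℝ × E3 → ℝ) (s : ℝ) (y : E3) : ℝ :=
  Dm X s y * f (s, X (s, y))

private noncomputable def ρ'm (V X : ℝ × E3 → E3) (f : ℝ × E3 → ℝ) (s : ℝ) (y : E3) : ℝ :=
  τm V X s y * Dm X s y * f (s, X (s, y)) +
    Dm X s y * (fderiv ℝ f (s, X (s, y)) (1, Wm V X (s, y)))


/-- Time partial derivative `∂_t f` of a function on `ℝ × ℝ³`. -/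
noncomputable def pdt (f : ℝ × (Fin 3 → ℝ) → ℝ) (q : ℝ × (Fin 3 → ℝ)) : ℝ :=
  fderiv ℝ f q (1, 0)

/-- Spatial partial derivative `∂_{x_j} f` of a function on `ℝ × ℝ³`. -/
noncomputable def pdx (j : Fin 3) (f : ℝ × (Fin 3 → ℝ) → ℝ) (q : ℝ × (Fin 3 → ℝ)) : ℝ :=
  fderiv ℝ f q (0, Pi.single j 1)

set_option maxHeartbeats 2000000 in
/-- Transport theorem: if `Ω_t = X(t, Ω₀)` is transported by the flow `X` of a `C¹`
velocity field `V`, then for every `C¹` compactly supported `f`,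
`d/dt ∫_{Ω_t} f dx = ∫_{Ω_t} (∂_t f + div_x (f V)) dx` for `t ∈ (0,T)`. -/
theorem stmt_10 (T : ℝ) (hT : 0 < T)
    (V : ℝ × (Fin 3 → ℝ) → Fin 3 → ℝ) (hV : ContDiff ℝ 1 V)
    (X : ℝ × (Fin 3 → ℝ) → Fin 3 → ℝ) (hX : ContDiff ℝ 1 X)
    (hflow : ∀ t x, HasDerivAt (fun s => X (s, x)) (V (t, X (t, x))) t)
    (hX0 : ∀ x, X (0, x) = x)
    (hinj : ∀ t ∈ Set.Icc (0:ℝ) T, Function.Injective fun x => X (t, x))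
    (Ω₀ : Set (Fin 3 → ℝ)) (hΩ₀ : IsOpen Ω₀) (hbdd : Bornology.IsBounded Ω₀)
    (f : ℝ × (Fin 3 → ℝ) → ℝ) (hf : ContDiff ℝ 1 f) (hfc : HasCompactSupport f) :
    ∀ t ∈ Set.Ioo (0:ℝ) T,
      HasDerivAt (fun s => ∫ x in (fun y => X (s, y)) '' Ω₀, f (s, x))
        (∫ x in (fun y => X (t, y)) '' Ω₀,
          pdt f (t, x) + ∑ j, pdx j (fun q => f q * V q j) (t, x)) t := by
  intro t₀ ht₀
  have hsec : ∀ g : ℝ × E3 → ℝ, Continuous g → ∀ s : ℝ, Continuous fun y => g (s, y) :=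
    fun g hg s => hg.comp (continuous_const.prodMk continuous_id)
  -- spatial derivative of X
  have hJd : ∀ t y, HasFDerivAt (fun x => X (t, x)) (Jm X t y) y := by
    intro t y
    have h1 : HasFDerivAt X (fderiv ℝ X (t, y)) (t, y) :=
      (hX.differentiable one_ne_zero (t, y)).hasFDerivAt
    have h2 : HasFDerivAt (fun x : E3 => ((t, x) : ℝ × E3))
        (ContinuousLinearMap.inr ℝ ℝ E3) y := (hasFDerivAt_const t y).prodMk (hasFDerivAt_id y)
    exact h1.comp y h2
  have hJcont : Continuous (fun p : ℝ × E3 => Jm X p.1 p.2) :=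
    Continuous.clm_comp (hX.continuous_fderiv one_ne_zero) continuous_const
  -- spatial derivative of V
  have hAd : ∀ t x, HasFDerivAt (fun z => V (t, z)) (Am V (t, x)) x := by
    intro t x
    have h1 : HasFDerivAt V (fderiv ℝ V (t, x)) (t, x) :=
      (hV.differentiable one_ne_zero (t, x)).hasFDerivAt
    have h2 : HasFDerivAt (fun z : E3 => ((t, z) : ℝ × E3))
        (ContinuousLinearMap.inr ℝ ℝ E3) x := (hasFDerivAt_const t x).prodMk (hasFDerivAt_id x)
    exact h1.comp x h2
  have hAcont : Continuous (Am V) :=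
    Continuous.clm_comp (hV.continuous_fderiv one_ne_zero) continuous_const
  -- Wm V X = V(t, X(t,y))
  have hW : ContDiff ℝ 1 (Wm V X) := hV.comp (contDiff_fst.prodMk hX)
  have hWcont : Continuous (Wm V X) := hW.continuous
  -- Bm V X: spatial derivative of Wm V X
  have hBd : ∀ s y, HasFDerivAt (fun z => Wm V X (s, z)) (Bm V X s y) y := by
    intro s y
    exact (hAd s (X (s, y))).comp y (hJd s y)
  have hBcont : Continuous (fun p : ℝ × E3 => Bm V X p.1 p.2) :=
    Continuous.clm_comp (hAcont.comp (continuous_fst.prodMk hX.continuous)) hJcont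
  -- integral representation of X
  have hXint : ∀ t y, X (t, y) = y + ∫ s in (0:ℝ)..t, Wm V X (s, y) := by
    intro t y
    have hc : Continuous (fun s => Wm V X (s, y)) :=
      hWcont.comp (continuous_id.prodMk continuous_const)
    have hftc : ∀ u : ℝ, HasDerivAt (fun r => ∫ s in (0:ℝ)..r, Wm V X (s, y)) (Wm V X (u, y)) u := by
      intro u
      exact intervalIntegral.integral_hasDerivAt_right (hc.intervalIntegrable 0 u)
        (hc.stronglyMeasurableAtFilter volume (nhds u)) hc.continuousAt
    have hg : ∀ u : ℝ, HasDerivAt (fun r => X (r, y) - ∫ s in (0:ℝ)..r, Wm V X (s, y)) 0 u := by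
      intro u
      have := (hflow u y).sub (hftc u)
      exact this.congr_deriv (by simp [Wm])
    have hconst := is_const_of_deriv_eq_zero (fun u => (hg u).differentiableAt)
      (fun u => (hg u).deriv) t 0
    simp only [intervalIntegral.integral_same, sub_zero, hX0 y] at hconst
    rwa [sub_eq_iff_eq_add] at hconst
  -- integral representation of Jm X
  have hJrep : ∀ t y, Jm X t y = ContinuousLinearMap.id ℝ E3 + ∫ s in (0:ℝ)..t, Bm V X s y := by
    intro t y₀
    obtain ⟨C, hC⟩ := ((isCompact_uIcc (a := (0:ℝ)) (b := t)).prod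
      (isCompact_closedBall y₀ 1)).exists_bound_of_continuousOn hBcont.continuousOn
    have hint : HasFDerivAt (fun y => ∫ s in (0:ℝ)..t, Wm V X (s, y))
        (∫ s in (0:ℝ)..t, Bm V X s y₀) y₀ := by
      apply intervalIntegral.hasFDerivAt_integral_of_dominated_of_fderiv_le
        (F := fun y s => Wm V X (s, y)) (F' := fun y s => Bm V X s y) (bound := fun _ => C)
        (Metric.ball_mem_nhds y₀ one_pos)
      · exact Filter.Eventually.of_forall fun y =>
          ((hWcont.comp (continuous_id.prodMk continuous_const)).aestronglyMeasurable)
      · exact (hWcont.comp (continuous_id.prodMk continuous_const)).intervalIntegrable 0 t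
      · exact (hBcont.comp (continuous_id.prodMk continuous_const)).aestronglyMeasurable
      · refine Filter.Eventually.of_forall fun s hs y hy => ?_
        exact hC (s, y) ⟨Set.uIoc_subset_uIcc hs, Metric.ball_subset_closedBall hy⟩
      · exact intervalIntegrable_const
      · exact Filter.Eventually.of_forall fun s _ y _ => hBd s y
    have hXd : HasFDerivAt (fun y => X (t, y))
        (ContinuousLinearMap.id ℝ E3 + ∫ s in (0:ℝ)..t, Bm V X s y₀) y₀ := by
      have heq : (fun y => X (t, y)) = fun y => y + ∫ s in (0:ℝ)..t, Wm V X (s, y) :=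
        funext fun y => hXint t y
      rw [heq]
      exact (hasFDerivAt_id y₀).add hint
    exact (hJd t y₀).unique hXd
  -- time derivative of Jm X
  have hJt : ∀ t y, HasDerivAt (fun s => Jm X s y) (Bm V X t y) t := by
    intro t y
    have heq : (fun s => Jm X s y) =
        fun s => ContinuousLinearMap.id ℝ E3 + ∫ u in (0:ℝ)..s, Bm V X u y :=
      funext fun s => hJrep s y
    rw [heq]
    have hc : Continuous fun s => Bm V X s y := hBcont.comp (continuous_id.prodMk continuous_const)
    have h := intervalIntegral.integral_hasDerivAt_right (hc.intervalIntegrable 0 t)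
      (hc.stronglyMeasurableAtFilter volume (nhds t)) hc.continuousAt
    exact h.const_add (ContinuousLinearMap.id ℝ E3)
  -- matrix of Jm X, determinant, trace
  have hdetJ : ∀ t y, (Jm X t y).det = Dm X t y := by
    intro t y
    have hMe : Mm X t y = LinearMap.toMatrix' ((Jm X t y : E3 →ₗ[ℝ] E3)) := by
      ext i j
      rw [LinearMap.toMatrix'_apply]
      simp [Mm, single_eq_ite]
    show (Jm X t y).det = (Mm X t y).det
    rw [hMe, LinearMap.det_toMatrix']
  have hMt : ∀ t y i j, HasDerivAt (fun s => Mm X s y i j) (Bm V X t y (Pi.single j 1) i) t := by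
    intro t y i j
    have h1 : HasDerivAt (fun s => Jm X s y (Pi.single j 1)) (Bm V X t y (Pi.single j 1)) t := by
      have := (hJt t y).clm_apply (hasDerivAt_const t (Pi.single j 1 : E3))
      simpa [Wm] using this
    have h2 := ((ContinuousLinearMap.proj (R := ℝ) (φ := fun _ : Fin 3 => ℝ)
      i).hasFDerivAt).comp_hasDerivAt t h1
    exact h2
  have hDt : ∀ t y, HasDerivAt (fun s => Dm X s y) (τm V X t y * Dm X t y) t := by
    intro t y
    have hA : ∀ i j, HasDerivAt (fun s => Mm X s y i j)
        (∑ k, (Matrix.of fun i' k' => Am V (t, X (t, y)) (Pi.single k' 1) i') i k * Mm X t y k j) t := by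
      intro i j
      have h0 := hMt t y i j
      convert h0 using 1
      have hBapp : Bm V X t y (Pi.single j 1) i = Am V (t, X (t, y)) (Jm X t y (Pi.single j 1)) i := rfl
      rw [hBapp, clm_apply_eq_sum (Am V (t, X (t, y))) (Jm X t y (Pi.single j 1)) i]
      apply Finset.sum_congr rfl
      intro k _
      simp only [Matrix.of_apply, Mm]
      ring
    have hode := det3_ode (fun s => Mm X s y)
      (Matrix.of fun i' k' => Am V (t, X (t, y)) (Pi.single k' 1) i') t hA
    have htr : (Matrix.of fun i' k' => Am V (t, X (t, y)) (Pi.single k' 1) i').trace = τm V X t y := by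
      simp [Matrix.trace, Matrix.diag, τm]
    rwa [htr] at hode
  have hD0 : ∀ y, Dm X 0 y = 1 := by
    intro y
    have hid : Jm X 0 y = ContinuousLinearMap.id ℝ E3 := by
      have h1 : HasFDerivAt (fun x : E3 => X (0, x)) (Jm X 0 y) y := hJd 0 y
      have h2 : HasFDerivAt (fun x : E3 => X (0, x)) (ContinuousLinearMap.id ℝ E3) y := by
        have heq : (fun x : E3 => X (0, x)) = id := funext fun x => hX0 x
        rw [heq]; exact hasFDerivAt_id y
      exact h1.unique h2
    have hM1 : Mm X 0 y = 1 := by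
      ext i j
      simp [Mm, hid, Matrix.one_apply, Pi.single_apply]
    show (Mm X 0 y).det = 1
    rw [hM1, Matrix.det_one]
  have hMcont : Continuous fun p : ℝ × E3 => Mm X p.1 p.2 := by
    apply continuous_matrix
    intro i j
    exact (continuous_apply i).comp (hJcont.clm_apply continuous_const)
  have hDcont : Continuous fun p : ℝ × E3 => Dm X p.1 p.2 := hMcont.matrix_det
  have hτcont : Continuous fun p : ℝ × E3 => τm V X p.1 p.2 := by
    apply continuous_finset_sum
    intro i _
    exact (continuous_apply i).comp
      ((hAcont.comp (continuous_fst.prodMk hX.continuous)).clm_apply continuous_const)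
  have hDpos : ∀ t y, 0 < Dm X t y := by
    intro t y
    have hτc : Continuous fun s => τm V X s y := hτcont.comp (continuous_id.prodMk continuous_const)
    have hI : ∀ u : ℝ, HasDerivAt (fun r => ∫ s in (0:ℝ)..r, τm V X s y) (τm V X u y) u := fun u =>
      intervalIntegral.integral_hasDerivAt_right (hτc.intervalIntegrable 0 u)
        (hτc.stronglyMeasurableAtFilter volume (nhds u)) hτc.continuousAt
    have hφd : ∀ u, HasDerivAt
        (fun r => Dm X r y * Real.exp (-∫ s in (0:ℝ)..r, τm V X s y)) 0 u := by
      intro u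
      have he : HasDerivAt (fun r => Real.exp (-∫ s in (0:ℝ)..r, τm V X s y))
          (Real.exp (-∫ s in (0:ℝ)..u, τm V X s y) * -τm V X u y) u := ((hI u).neg).exp
      have hh := (hDt u y).mul he
      refine hh.congr_deriv ?_
      ring
    have hconst := is_const_of_deriv_eq_zero (fun u => (hφd u).differentiableAt)
      (fun u => (hφd u).deriv) t 0
    have hφt : Dm X t y * Real.exp (-∫ s in (0:ℝ)..t, τm V X s y) = 1 := by
      simpa [hD0 y] using hconst
    nlinarith [Real.exp_pos (-∫ s in (0:ℝ)..t, τm V X s y)]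
  -- change of variables
  have hcov : ∀ s ∈ Set.Icc (0:ℝ) T, ∀ g : E3 → ℝ,
      ∫ x in (fun y => X (s, y)) '' Ω₀, g x = ∫ y in Ω₀, Dm X s y * g (X (s, y)) := by
    intro s hs g
    have h := integral_image_eq_integral_abs_det_fderiv_smul volume hΩ₀.measurableSet
      (fun y _ => (hJd s y).hasFDerivWithinAt) ((hinj s hs).injOn) g
    rw [h]
    refine setIntegral_congr_fun hΩ₀.measurableSet fun y _ => ?_
    rw [hdetJ, abs_of_pos (hDpos s y), smul_eq_mul]
  -- time derivative of f along the flow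
  have hfXd : ∀ s y, HasDerivAt (fun r => f (r, X (r, y)))
      ((fderiv ℝ f (s, X (s, y))) (1, Wm V X (s, y))) s := by
    intro s y
    have hcurve : HasDerivAt (fun r => ((r, X (r, y)) : ℝ × E3)) (1, Wm V X (s, y)) s :=
      (hasDerivAt_id s).prodMk (hflow s y)
    exact ((hf.differentiable one_ne_zero (s, X (s, y))).hasFDerivAt).comp_hasDerivAt s hcurve
  have hρd : ∀ s y, HasDerivAt (fun r => ρm X f r y) (ρ'm V X f s y) s := fun s y =>
    (hDt s y).mul (hfXd s y)
  have hfXcont : Continuous fun p : ℝ × E3 => f (p.1, X p) :=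
    hf.continuous.comp (continuous_fst.prodMk hX.continuous)
  have hρcont : Continuous fun p : ℝ × E3 => ρm X f p.1 p.2 := hDcont.mul hfXcont
  have hρ'cont : Continuous fun p : ℝ × E3 => ρ'm V X f p.1 p.2 := by
    have hdf : Continuous fun p : ℝ × E3 => fderiv ℝ f (p.1, X p) (1, Wm V X p) :=
      Continuous.clm_apply
        ((hf.continuous_fderiv one_ne_zero).comp (continuous_fst.prodMk hX.continuous))
        (continuous_const.prodMk hWcont)
    exact ((hτcont.mul hDcont).mul hfXcont).add (hDcont.mul hdf)
  -- differentiation under the integral sign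
  obtain ⟨C, hC⟩ := ((isCompact_Icc (a := t₀ - 1) (b := t₀ + 1)).prod
    hbdd.isCompact_closure).exists_bound_of_continuousOn hρ'cont.continuousOn
  have hρs : ∀ s : ℝ, Continuous fun y => ρm X f s y := fun s => hsec _ hρcont s
  have hρ's : ∀ s : ℝ, Continuous fun y => ρ'm V X f s y := fun s => hsec _ hρ'cont s
  have hint_t₀ : Integrable (ρm X f t₀) (volume.restrict Ω₀) :=
    (((hρs t₀).continuousOn.integrableOn_compact hbdd.isCompact_closure).mono_set
      subset_closure)
  have main := hasDerivAt_integral_of_dominated_loc_of_deriv_le (μ := volume.restrict Ω₀)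
    (F := fun s y => ρm X f s y) (F' := fun s y => ρ'm V X f s y) (x₀ := t₀)
    (bound := fun _ => C) (Metric.ball_mem_nhds t₀ one_pos)
    (Filter.Eventually.of_forall fun s => (hρs s).aestronglyMeasurable)
    hint_t₀
    ((hρ's t₀).aestronglyMeasurable)
    ((ae_restrict_iff' hΩ₀.measurableSet).2 (Filter.Eventually.of_forall fun y hy s hs => by
      have hd := Metric.mem_ball.mp hs
      rw [Real.dist_eq] at hd
      obtain ⟨ha, hb⟩ := abs_lt.mp hd
      exact hC (s, y) ⟨⟨by linarith, by linarith⟩, subset_closure hy⟩))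
    (integrableOn_const hbdd.measure_lt_top.ne)
    (Filter.Eventually.of_forall fun y s _ => hρd s y)
  -- decomposition of the full derivative of f in the basis directions
  have hdecomp : ∀ (L : (ℝ × E3) →L[ℝ] ℝ) (v : E3),
      L (1, v) = L (1, 0) + ∑ j, v j * L (0, Pi.single j 1) := by
    intro L v
    have h2 : (∑ j, v j • (((0:ℝ), (Pi.single j 1 : E3)) : ℝ × E3)) = ((0:ℝ), v) := by
      apply Prod.ext
      · rw [Prod.fst_sum]
        simp
      · rw [Prod.snd_sum]
        funext k
        simp [Finset.sum_apply, Pi.single_apply]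
    have h1 : ((1:ℝ), v) = ((1:ℝ), (0:E3)) + ((0:ℝ), v) := by simp
    rw [h1, map_add, ← h2, map_sum]
    simp only [_root_.map_smul, smul_eq_mul]
  -- computation of pdx of f * V j
  have hpdx : ∀ (x : E3) (j : Fin 3), pdx j (fun q => f q * V q j) (t₀, x) =
      V (t₀, x) j * fderiv ℝ f (t₀, x) (0, Pi.single j 1) +
        f (t₀, x) * Am V (t₀, x) (Pi.single j 1) j := by
    intro x j
    have hfd : HasFDerivAt f (fderiv ℝ f (t₀, x)) (t₀, x) :=
      (hf.differentiable one_ne_zero _).hasFDerivAt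
    have hVd : HasFDerivAt V (fderiv ℝ V (t₀, x)) (t₀, x) :=
      (hV.differentiable one_ne_zero _).hasFDerivAt
    have hVj : HasFDerivAt (fun q => V q j)
        ((ContinuousLinearMap.proj (R := ℝ) (φ := fun _ : Fin 3 => ℝ) j).comp
          (fderiv ℝ V (t₀, x))) (t₀, x) :=
      HasFDerivAt.comp (t₀, x)
        ((ContinuousLinearMap.proj (R := ℝ) (φ := fun _ : Fin 3 => ℝ) j).hasFDerivAt) hVd
    have hprod : HasFDerivAt (fun q => f q * V q j) _ (t₀, x) := hfd.mul hVj
    rw [pdx, hprod.fderiv]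
    have hAmj : Am V (t₀, x) (Pi.single j 1) j =
        fderiv ℝ V (t₀, x) ((0:ℝ), (Pi.single j 1 : E3)) j := rfl
    simp only [ContinuousLinearMap.add_apply, ContinuousLinearMap.coe_smul', Pi.smul_apply,
      smul_eq_mul, ContinuousLinearMap.comp_apply, ContinuousLinearMap.proj_apply, hAmj]
    ring
  -- pointwise identity
  have hkey : ∀ y : E3, Dm X t₀ y *
      (pdt f (t₀, X (t₀, y)) + ∑ j, pdx j (fun q => f q * V q j) (t₀, X (t₀, y))) =
      ρ'm V X f t₀ y := by
    intro y
    have hW0 : Wm V X (t₀, y) = V (t₀, X (t₀, y)) := rfl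
    have hpdx' : ∀ j : Fin 3, pdx j (fun q => f q * V q j) (t₀, X (t₀, y)) =
        V (t₀, X (t₀, y)) j * fderiv ℝ f (t₀, X (t₀, y)) (0, Pi.single j 1) +
        f (t₀, X (t₀, y)) * Am V (t₀, X (t₀, y)) (Pi.single j 1) j := hpdx (X (t₀, y))
    simp only [pdt, ρ'm, hW0, hpdx', τm]
    rw [hdecomp (fderiv ℝ f (t₀, X (t₀, y))) (V (t₀, X (t₀, y)))]
    rw [Finset.sum_add_distrib, ← Finset.mul_sum]
    ring
  -- assembling
  have ht₀Icc : t₀ ∈ Set.Icc (0:ℝ) T := ⟨le_of_lt ht₀.1, le_of_lt ht₀.2⟩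
  have hval : (∫ x in (fun y => X (t₀, y)) '' Ω₀,
      (pdt f (t₀, x) + ∑ j, pdx j (fun q => f q * V q j) (t₀, x))) =
      ∫ y in Ω₀, ρ'm V X f t₀ y := by
    rw [hcov t₀ ht₀Icc (fun x => pdt f (t₀, x) + ∑ j, pdx j (fun q => f q * V q j) (t₀, x))]
    exact setIntegral_congr_fun hΩ₀.measurableSet fun y _ => hkey y
  have hev : (fun s => ∫ x in (fun y => X (s, y)) '' Ω₀, f (s, x)) =ᶠ[nhds t₀]
      (fun s => ∫ y in Ω₀, ρm X f s y) := by
    filter_upwards [isOpen_Ioo.mem_nhds ht₀] with s hs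
    rw [hcov s ⟨le_of_lt hs.1, le_of_lt hs.2⟩ (fun x => f (s, x))]
    rfl
  have final := (main.2).congr_of_eventuallyEq hev
  rw [hval]
  exact final
end
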